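/- If (X, σ_X, φ) and (Y, σ_Y, ψ) are shift-flip systems and Φ is a conjugacy from (X, σ_X, φ) to (Y, σ_Y, ψ), then Φ(A(φ)) = A(ψ). -/

import Mathlib

open Set Function

/-- The map `x ↦ σᵐ(x)` on the full shift `A^ℤ`, where `σᵐ(x)_i = x_{i+m}`. -/
def shiftZ (A : Type*) (m : ℤ) : (ℤ → A) → ℤ → A := fun x i => x (i + m)

/-- The shift map `σ` on the full shift `A^ℤ`: `σ(x)_i = x_{i+1}`. -/
abbrev shiftMap (A : Type*) : (ℤ → A) → ℤ → A := shiftZ A 1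

/-- The inverse shift map `σ⁻¹`: `σ⁻¹(x)_i = x_{i-1}`. -/
abbrev shiftInv (A : Type*) : (ℤ → A) → ℤ → A := shiftZ A (-1)

/-- The reversal map `ρ`: `ρ(x)_i = x_{-i}`. -/
def revMap (A : Type*) : (ℤ → A) → ℤ → A := fun x i => x (-i)

/-- A shift space over `A`: a nonempty closed subset of `A^ℤ` with `σ(X) = X`. -/
def IsShiftSpace {A : Type*} [TopologicalSpace A] (X : Set (ℤ → A)) : Prop :=
  X.Nonempty ∧ IsClosed X ∧ shiftMap A '' X = X

/-- The word `w` occurs in `x` at position `i`, i.e. `x_{[i, i+|w|-1]} = w`. -/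
def OccursAt {A : Type*} (w : List A) (x : ℤ → A) (i : ℤ) : Prop :=
  ∀ k : Fin w.length, x (i + (k : ℕ)) = w.get k

/-- `w` is a block of `X`: it occurs in some point of `X`. -/
def IsBlockOf {A : Type*} (X : Set (ℤ → A)) (w : List A) : Prop :=
  ∃ x ∈ X, ∃ i : ℤ, OccursAt w x i

/-- `X` is irreducible: any two blocks can be joined by a block. -/
def ShiftIrreducible {A : Type*} (X : Set (ℤ → A)) : Prop :=
  ∀ u v : List A, IsBlockOf X u → IsBlockOf X v → ∃ w : List A, IsBlockOf X (u ++ w ++ v)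

/-- `w` is a finitary (intrinsically synchronizing) block of `X`. -/
def IsFinitary {A : Type*} (X : Set (ℤ → A)) (w : List A) : Prop :=
  IsBlockOf X w ∧ ∀ u v : List A, IsBlockOf X (u ++ w) → IsBlockOf X (w ++ v) →
    IsBlockOf X (u ++ w ++ v)

/-- A synchronized system: an irreducible shift space with a finitary block. -/
def IsSynchronized {A : Type*} [TopologicalSpace A] (X : Set (ℤ → A)) : Prop :=
  IsShiftSpace X ∧ ShiftIrreducible X ∧ ∃ w : List A, IsFinitary X w

/-- `φ` (as a map of the ambient full shift) restricts to a flip for `(X, σ_X)`: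
a homeomorphism `X → X` with `φ ∘ φ = id` and `φ ∘ σ_X = σ_X⁻¹ ∘ φ`.
(Being a homeomorphism is automatic from continuity and `φ ∘ φ = id` on `X`.) -/
def IsFlip {A : Type*} [TopologicalSpace A] (X : Set (ℤ → A))
    (φ : (ℤ → A) → ℤ → A) : Prop :=
  MapsTo φ X X ∧ ContinuousOn φ X ∧ (∀ x ∈ X, φ (φ x) = x) ∧
    ∀ x ∈ X, φ (shiftMap A x) = shiftInv A (φ x)

/-- The shift-flip systems `(X, σ_X, φ)` and `(Y, σ_Y, ψ)` are conjugate: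
there is a homeomorphism `Φ : X → Y` with `Φ ∘ σ_X = σ_Y ∘ Φ` and `Φ ∘ φ = ψ ∘ Φ`. -/
def SystemConj {A B : Type*} [TopologicalSpace A] [TopologicalSpace B]
    (X : Set (ℤ → A)) (φ : (ℤ → A) → ℤ → A)
    (Y : Set (ℤ → B)) (ψ : (ℤ → B) → ℤ → B) : Prop :=
  ∃ (Φ : (ℤ → A) → ℤ → B) (Ψ : (ℤ → B) → ℤ → A),
    MapsTo Φ X Y ∧ ContinuousOn Φ X ∧ MapsTo Ψ Y X ∧ ContinuousOn Ψ Y ∧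
    InvOn Ψ Φ X Y ∧
    (∀ x ∈ X, Φ (shiftMap A x) = shiftMap B (Φ x)) ∧ ∀ x ∈ X, Φ (φ x) = ψ (Φ x)

/-- Two flips `φ, φ'` for `(X, σ_X)` are conjugate. -/
def FlipConj {A : Type*} [TopologicalSpace A] (X : Set (ℤ → A))
    (φ φ' : (ℤ → A) → ℤ → A) : Prop :=
  SystemConj X φ X φ'

/-- `F(φ; n) = {x ∈ X : σ_X^n(x) = x and φ(x) = x}`. -/
def flipFix {A : Type*} (X : Set (ℤ → A)) (φ : (ℤ → A) → ℤ → A) (n : ℕ) :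
    Set (ℤ → A) :=
  {x ∈ X | (shiftMap A)^[n] x = x ∧ φ x = x}

/-- `A(φ)`: points of `X` in which some finitary block occurs infinitely often and
which differ from their `φ`-image in at least one but only finitely many coordinates. -/
def flipAsym {A : Type*} (X : Set (ℤ → A)) (φ : (ℤ → A) → ℤ → A) :
    Set (ℤ → A) :=
  {x ∈ X | (∃ w : List A, IsFinitary X w ∧ {i : ℤ | OccursAt w x i}.Infinite) ∧
    {i : ℤ | φ x i ≠ x i}.Nonempty ∧ {i : ℤ | φ x i ≠ x i}.Finite}

/-- `x` is a bi-infinite concatenation of words from `C`. -/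
def IsConcat {A : Type*} (C : Set (List A)) (x : ℤ → A) : Prop :=
  ∃ t : ℤ → ℤ, StrictMono t ∧ (∀ n : ℤ, ∃ j : ℤ, t j ≤ n ∧ n < t (j + 1)) ∧
    ∀ j : ℤ, ∃ w ∈ C, t (j + 1) = t j + w.length ∧ OccursAt w x (t j)

/-- A coded system: a shift space in which the set of bi-infinite concatenations of
words from some code `C` is dense. -/
def IsCoded {A : Type*} [TopologicalSpace A] (X : Set (ℤ → A)) : Prop :=
  IsShiftSpace X ∧ ∃ C : Set (List A), closure {x | IsConcat C x} = X

section Helpers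
variable {A : Type*} {B : Type*}

lemma shiftZ_apply (m : ℤ) (x : ℤ → A) (i : ℤ) : shiftZ A m x i = x (i + m) := rfl

lemma shiftZ_shiftZ (m n : ℤ) (x : ℤ → A) : shiftZ A m (shiftZ A n x) = shiftZ A (m + n) x :=
  funext fun i => by simp [shiftZ, add_assoc]

lemma shiftZ_zero (x : ℤ → A) : shiftZ A 0 x = x := funext fun i => by simp [shiftZ]

lemma shiftZ_mem [TopologicalSpace A] {X : Set (ℤ → A)} (hX : IsShiftSpace X) :
    ∀ m : ℤ, ∀ x ∈ X, shiftZ A m x ∈ X := by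
  have h1 : ∀ x ∈ X, shiftZ A 1 x ∈ X := by
    intro x hx
    have : shiftZ A 1 x ∈ shiftMap A '' X := ⟨x, hx, rfl⟩
    rwa [hX.2.2] at this
  have h2 : ∀ x ∈ X, shiftZ A (-1) x ∈ X := by
    intro x hx
    rw [← hX.2.2] at hx
    obtain ⟨y, hy, rfl⟩ := hx
    rw [show (shiftMap A y) = shiftZ A 1 y from rfl, shiftZ_shiftZ]
    simpa [shiftZ_zero] using hy
  intro m
  induction m using Int.induction_on with
  | zero => intro x hx; rwa [shiftZ_zero]
  | succ n ih =>
      intro x hx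
      have := h1 _ (ih x hx)
      rw [shiftZ_shiftZ] at this
      rwa [show (1:ℤ) + n = n + 1 by ring] at this
  | pred n ih =>
      intro x hx
      have := h2 _ (ih x hx)
      rw [shiftZ_shiftZ] at this
      rwa [show (-1:ℤ) + -n = -↑n - 1 by ring] at this

lemma occursAt_iff {w : List A} {x : ℤ → A} {p : ℤ} :
    OccursAt w x p ↔ ∀ k : ℕ, (hk : k < w.length) → x (p + k) = w[k] := by
  constructor
  · intro h k hk; exact h ⟨k, hk⟩
  · intro h k; exact h k k.2

lemma occursAt_agree {w : List A} {x x' : ℤ → A} {p p' : ℤ}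
    (h : OccursAt w x p) (h' : OccursAt w x' p') :
    ∀ j : ℤ, p ≤ j → j < p + w.length → x j = x' (j - p + p') := by
  intro j h1 h2
  have hk : (j - p).toNat < w.length := by omega
  have e1 := occursAt_iff.mp h _ hk
  have e2 := occursAt_iff.mp h' _ hk
  have g1 : p + ((j - p).toNat : ℤ) = j := by omega
  have g2 : p' + ((j - p).toNat : ℤ) = j - p + p' := by omega
  rw [g1] at e1; rw [g2] at e2; rw [e1, e2]

lemma occursAt_congr {w : List A} {x x' : ℤ → A} {p : ℤ} (h : OccursAt w x p)
    (hagree : ∀ j : ℤ, p ≤ j → j < p + w.length → x' j = x j) : OccursAt w x' p := by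
  rw [occursAt_iff] at h ⊢
  intro k hk
  rw [hagree (p + k) (by omega) (by omega)]
  exact h k hk

lemma occursAt_append {u v : List A} {x : ℤ → A} {p : ℤ} :
    OccursAt (u ++ v) x p ↔ OccursAt u x p ∧ OccursAt v x (p + u.length) := by
  simp only [occursAt_iff, List.length_append]
  constructor
  · intro h
    refine ⟨fun k hk => ?_, fun k hk => ?_⟩
    · have := h k (by omega)
      rwa [List.getElem_append_left hk] at this
    · have := h (u.length + k) (by omega)
      rw [List.getElem_append_right (by omega)] at this
      rw [show p + ↑u.length + (k:ℤ) = p + ↑(u.length + k) by push_cast; ring]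
      convert this using 2
      omega
  · intro ⟨h1, h2⟩ k hk
    by_cases hc : k < u.length
    · rw [List.getElem_append_left hc]; exact h1 k hc
    · rw [List.getElem_append_right (by omega)]
      have := h2 (k - u.length) (by omega)
      rwa [show p + ↑u.length + ↑(k - u.length) = p + ↑k by omega] at this

lemma occursAt_ofFn {n : ℕ} {f : Fin n → A} {x : ℤ → A} {p : ℤ} :
    OccursAt (List.ofFn f) x p ↔ ∀ k : ℕ, (hk : k < n) → x (p + k) = f ⟨k, hk⟩ := by
  simp only [occursAt_iff, List.length_ofFn, List.getElem_ofFn]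

lemma occursAt_shiftZ {w : List A} {x : ℤ → A} {m p : ℤ} :
    OccursAt w (shiftZ A m x) p ↔ OccursAt w x (p + m) := by
  simp only [occursAt_iff, shiftZ_apply]
  constructor <;> intro h k hk <;>
    [rw [show p + m + (k:ℤ) = p + k + m by ring]; rw [show p + (k:ℤ) + m = p + m + k by ring]] <;>
    exact h k hk

end Helpers

section CHL
variable {A : Type*} [Fintype A] [TopologicalSpace A] [DiscreteTopology A]
variable {C : Type*} [TopologicalSpace C] [DiscreteTopology C]

/-- uniform local dependence for continuous maps on closed subsets of the full shift -/
lemma exists_radius_zero {X : Set (ℤ → A)} (hXcl : IsClosed X)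
    (F : (ℤ → A) → C) (hF : ContinuousOn F X) :
    ∃ N : ℕ, ∀ x ∈ X, ∀ x' ∈ X, (∀ k : ℤ, k.natAbs ≤ N → x k = x' k) → F x = F x' := by
  have hcomp : IsCompact X := hXcl.isCompact
  -- for each x in X, a finite index set on which agreement forces equal F-value
  have key : ∀ x ∈ X, ∃ I : Finset ℤ, ∀ y ∈ X, (∀ i ∈ I, y i = x i) → F y = F x := by
    intro x hx
    have hcw : ContinuousWithinAt F X x := hF x hx
    have hmem : F ⁻¹' {F x} ∈ nhdsWithin x X := hcw (by simp [isOpen_discrete {F x} |>.mem_nhds rfl])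
    rw [mem_nhdsWithin] at hmem
    obtain ⟨U, hUopen, hxU, hUsub⟩ := hmem
    obtain ⟨I, u, hIu, hpi⟩ := isOpen_pi_iff.mp hUopen x hxU
    refine ⟨I, fun y hy hagree => ?_⟩
    have : y ∈ U := by
      apply hpi
      intro i hi
      rw [hagree i hi]
      exact (hIu i hi).2
    exact hUsub ⟨this, hy⟩
  choose! I hI using key
  -- cylinder sets
  set Cyl : (ℤ → A) → Set (ℤ → A) := fun x => {y | ∀ i ∈ I x, y i = x i} with hCyl
  have hCylOpen : ∀ x, IsOpen (Cyl x) := by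
    intro x
    have : Cyl x = ⋂ i ∈ (I x : Set ℤ), (fun y : ℤ → A => y i) ⁻¹' {x i} := by
      ext y; simp [hCyl]
    rw [this]
    exact Set.Finite.isOpen_biInter (Finset.finite_toSet _)
      (fun i _ => (continuous_apply i).isOpen_preimage _ (isOpen_discrete _))
  have hcover : X ⊆ ⋃ x : X, Cyl x := by
    intro y hy
    exact Set.mem_iUnion.mpr ⟨⟨y, hy⟩, fun i _ => rfl⟩
  obtain ⟨t, ht⟩ := hcomp.elim_finite_subcover (fun x : X => Cyl x) (fun x => hCylOpen x) hcover
  set T : Finset ℤ := t.biUnion (fun x => I x) with hT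
  refine ⟨T.sup Int.natAbs, fun x hx x' hx' hagree => ?_⟩
  obtain ⟨m, hmt, hxm⟩ : ∃ m ∈ t, x ∈ Cyl (m : ℤ → A) := by
    have := ht hx
    simpa using this
  have hxm' : x' ∈ Cyl (m : ℤ → A) := by
    intro i hi
    have hiT : i ∈ T := Finset.mem_biUnion.mpr ⟨m, hmt, hi⟩
    have : i.natAbs ≤ T.sup Int.natAbs := Finset.le_sup hiT
    rw [← hagree i this]
    exact hxm i hi
  rw [hI m m.2 x hx hxm, hI m m.2 x' hx' hxm']
end CHL

section Radius
variable {A : Type*} [Fintype A] [TopologicalSpace A] [DiscreteTopology A]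
variable {B : Type*} [TopologicalSpace B] [DiscreteTopology B]

/-- extend shift-commutation to all integer shifts -/
lemma commute_shiftZ {X : Set (ℤ → A)} (hX : IsShiftSpace X)
    (Φ : (ℤ → A) → ℤ → B)
    (hshift : ∀ x ∈ X, Φ (shiftMap A x) = shiftMap B (Φ x)) :
    ∀ m : ℤ, ∀ x ∈ X, Φ (shiftZ A m x) = shiftZ B m (Φ x) := by
  intro m
  induction m using Int.induction_on with
  | zero => intro x hx; rw [shiftZ_zero, shiftZ_zero]
  | succ n ih =>
      intro x hx
      have h1 : Φ (shiftZ A 1 (shiftZ A n x)) = shiftZ B 1 (Φ (shiftZ A n x)) :=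
        hshift _ (shiftZ_mem hX n x hx)
      rw [shiftZ_shiftZ, show (1:ℤ) + n = n + 1 by ring] at h1
      rw [h1, ih x hx, shiftZ_shiftZ, show (1:ℤ) + n = n + 1 by ring]
  | pred n ih =>
      intro x hx
      have hy : shiftZ A (-↑n - 1) x ∈ X := by
        have := shiftZ_mem hX (-↑n - 1) x hx; exact this
      have h1 : Φ (shiftZ A 1 (shiftZ A (-↑n - 1) x)) = shiftZ B 1 (Φ (shiftZ A (-↑n - 1) x)) :=
        hshift _ hy
      rw [shiftZ_shiftZ, show (1:ℤ) + (-↑n - 1) = -↑n by ring] at h1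
      rw [ih x hx] at h1
      have h2 := congrArg (shiftZ B (-1)) h1
      rw [shiftZ_shiftZ, shiftZ_shiftZ, show (-1:ℤ) + 1 = 0 by ring, shiftZ_zero,
        show (-1:ℤ) + -↑n = -↑n - 1 by ring] at h2
      rw [← h2]

/-- the sliding-block-code radius, valid at every coordinate -/
lemma exists_radius {X : Set (ℤ → A)} (hX : IsShiftSpace X)
    (Φ : (ℤ → A) → ℤ → B) (hΦ : ContinuousOn Φ X)
    (hshift : ∀ x ∈ X, Φ (shiftMap A x) = shiftMap B (Φ x)) :
    ∃ N : ℕ, ∀ x ∈ X, ∀ x' ∈ X, ∀ j : ℤ,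
      (∀ k : ℤ, (k - j).natAbs ≤ N → x k = x' k) → Φ x j = Φ x' j := by
  obtain ⟨N, hN⟩ := exists_radius_zero hX.2.1 (fun x => Φ x 0)
    ((continuous_apply (0 : ℤ)).comp_continuousOn hΦ)
  refine ⟨N, fun x hx x' hx' j hagree => ?_⟩
  have hc := commute_shiftZ hX Φ hshift
  have e1 : Φ x j = Φ (shiftZ A j x) 0 := by
    rw [hc j x hx, shiftZ_apply, zero_add]
  have e2 : Φ x' j = Φ (shiftZ A j x') 0 := by
    rw [hc j x' hx', shiftZ_apply, zero_add]
  rw [e1, e2]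
  apply hN _ (shiftZ_mem hX j x hx) _ (shiftZ_mem hX j x' hx')
  intro k hk
  simp only [shiftZ_apply]
  exact hagree (k + j) (by omega)
end Radius

set_option linter.unusedSectionVars false
section Ext
variable {A : Type*}

lemma getElem_idx_congr {l : List A} {i j : ℕ} (hij : i = j) {hi : i < l.length} :
    l[i]'hi = l[j]'(hij ▸ hi) := by subst hij; rfl

lemma blockOf_of_occurs {X : Set (ℤ → A)} {w : List A} {z : ℤ → A} {p : ℤ}
    (hz : z ∈ X) (h : OccursAt w z p) : IsBlockOf X w := ⟨z, hz, p, h⟩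

/-- a block of X that contains a finitary word is finitary -/
lemma ext_finitary {X : Set (ℤ → A)} {w₀ w : List A} (h₀ : IsFinitary X w₀)
    {z : ℤ → A} (hz : z ∈ X) {p : ℤ} {d : ℕ} (hw : OccursAt w z p)
    (h₀occ : OccursAt w₀ z (p + d)) (hd : d + w₀.length ≤ w.length) :
    IsFinitary X w := by
  have hmid : ∀ k : ℕ, (hk : k < w₀.length) → w[d + k]'(by omega) = w₀[k] := by
    intro k hk
    have e1 := occursAt_iff.mp hw (d + k) (by omega)
    have e2 := occursAt_iff.mp h₀occ k hk
    rw [show p + d + (k:ℤ) = p + ↑(d + k) by push_cast; ring] at e2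
    rw [← e1, ← e2]
  refine ⟨blockOf_of_occurs hz hw, fun u v hu hv => ?_⟩
  obtain ⟨z₁, hz₁, p₁, h1⟩ := hu
  rw [occursAt_append] at h1
  obtain ⟨hu1, hu2⟩ := h1
  obtain ⟨z₂, hz₂, p₂, h2⟩ := hv
  rw [occursAt_append] at h2
  obtain ⟨hv1, hv2⟩ := h2
  have hla : (w.take d).length = d := by rw [List.length_take]; omega
  have hlb : (w.drop (d + w₀.length)).length = w.length - (d + w₀.length) := List.length_drop
  have hA : OccursAt (w.take d) z₁ (p₁ + u.length) := by
    rw [occursAt_iff]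
    intro k hk
    rw [List.getElem_take]
    exact occursAt_iff.mp hu2 k (by omega)
  have hB : OccursAt w₀ z₁ (p₁ + u.length + d) := by
    rw [occursAt_iff]
    intro k hk
    have := occursAt_iff.mp hu2 (d + k) (by omega)
    rw [hmid k hk] at this
    rw [show p₁ + ↑u.length + ↑d + (k:ℤ) = p₁ + ↑u.length + ↑(d + k) by push_cast; ring]
    exact this
  have hC : OccursAt w₀ z₂ (p₂ + d) := by
    rw [occursAt_iff]
    intro k hk
    have := occursAt_iff.mp hv1 (d + k) (by omega)
    rw [hmid k hk] at this
    rw [show p₂ + ↑d + (k:ℤ) = p₂ + ↑(d + k) by push_cast; ring]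
    exact this
  have hD : OccursAt (w.drop (d + w₀.length)) z₂ (p₂ + d + w₀.length) := by
    rw [occursAt_iff]
    intro k hk
    rw [List.getElem_drop]
    have := occursAt_iff.mp hv1 (d + w₀.length + k) (by omega)
    rw [show p₂ + ↑d + ↑w₀.length + (k:ℤ) = p₂ + ↑(d + w₀.length + k) by push_cast; ring]
    exact this
  have hblk1 : IsBlockOf X ((u ++ w.take d) ++ w₀) := by
    refine blockOf_of_occurs (p := p₁) hz₁ ?_
    rw [occursAt_append, occursAt_append]
    refine ⟨⟨hu1, hA⟩, ?_⟩
    rw [show p₁ + ↑(u ++ w.take d).length = p₁ + ↑u.length + ↑d by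
      push_cast [List.length_append, List.length_take]; omega]
    exact hB
  have hblk2 : IsBlockOf X (w₀ ++ (w.drop (d + w₀.length) ++ v)) := by
    refine blockOf_of_occurs (p := p₂ + d) hz₂ ?_
    rw [occursAt_append, occursAt_append]
    refine ⟨hC, hD, ?_⟩
    rw [show p₂ + ↑d + ↑w₀.length + ↑(w.drop (d + w₀.length)).length = p₂ + ↑w.length by
      push_cast [List.length_drop]; omega]
    exact hv2
  obtain ⟨z₃, hz₃, p₃, h3⟩ := h₀.2 (u ++ w.take d) (w.drop (d + w₀.length) ++ v) hblk1 hblk2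
  rw [occursAt_append, occursAt_append, occursAt_append, occursAt_append] at h3
  obtain ⟨⟨⟨h3u, h3a⟩, h3w⟩, h3b, h3v⟩ := h3
  refine ⟨z₃, hz₃, p₃, ?_⟩
  rw [occursAt_append, occursAt_append]
  refine ⟨⟨h3u, ?_⟩, ?_⟩
  · rw [occursAt_iff]
    intro k hk
    rcases lt_or_ge k d with hc | hc
    · have := occursAt_iff.mp h3a k (by omega)
      rw [List.getElem_take] at this
      exact this
    rcases lt_or_ge k (d + w₀.length) with hc2 | hc2
    · have h5 := occursAt_iff.mp h3w (k - d) (by omega)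
      have e : w[k] = w₀[k - d]'(by omega) := by
        rw [getElem_idx_congr (show k = d + (k - d) by omega)]
        exact hmid (k - d) (by omega)
      rw [e]
      rw [show p₃ + ↑u.length + (k:ℤ) = p₃ + ↑(u ++ w.take d).length + ↑(k - d) by
        push_cast [List.length_append, List.length_take]; omega]
      exact h5
    · have h5 := occursAt_iff.mp h3b (k - (d + w₀.length)) (by omega)
      rw [List.getElem_drop] at h5
      rw [getElem_idx_congr (show d + w₀.length + (k - (d + w₀.length)) = k by omega)] at h5
      rw [show p₃ + ↑u.length + (k:ℤ) =
          p₃ + ↑((u ++ w.take d) ++ w₀).length + ↑(k - (d + w₀.length)) by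
        push_cast [List.length_append, List.length_take]; omega]
      exact h5
  · rw [show p₃ + ↑(u ++ w).length =
        p₃ + ↑((u ++ w.take d) ++ w₀).length + ↑(w.drop (d + w₀.length)).length by
      push_cast [List.length_append, List.length_take, List.length_drop]; omega]
    exact h3v
end Ext

section Pigeon
variable {A : Type*}

lemma pigeonhole_ext [Fintype A] {I₀ : Set ℤ} (h : I₀.Infinite) (ℓ : ℕ) (x : ℤ → A) (L : ℕ) :
    ∃ b : Fin ℓ → A, {i | i ∈ I₀ ∧ ∀ k : Fin ℓ, x (i - L + k) = b k}.Infinite := by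
  haveI := h.to_subtype
  obtain ⟨b, hb⟩ :=
    Finite.exists_infinite_fiber (fun i : I₀ => (fun k : Fin ℓ => x ((i : ℤ) - L + k)))
  refine ⟨b, ?_⟩
  have himg : (Subtype.val ''
      ((fun i : I₀ => (fun k : Fin ℓ => x ((i : ℤ) - L + k))) ⁻¹' {b})).Infinite :=
    Set.Infinite.image (Subtype.val_injective.injOn) (Set.infinite_coe_iff.mp hb)
  apply himg.mono
  rintro i ⟨⟨i', hi'⟩, hfib, rfl⟩
  exact ⟨hi', fun k => congrFun hfib k⟩
end Pigeon

section Transfer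
variable {A : Type*} [Fintype A] [TopologicalSpace A] [DiscreteTopology A]
variable {B : Type*} [Fintype B] [TopologicalSpace B] [DiscreteTopology B]

lemma finitary_transfer {X : Set (ℤ → A)} (hX : IsShiftSpace X) {Y : Set (ℤ → B)}
    {Φ : (ℤ → A) → ℤ → B} {Ψ : (ℤ → B) → ℤ → A}
    (hΦmaps : MapsTo Φ X Y) (hΨmaps : MapsTo Ψ Y X)
    (hinv : InvOn Ψ Φ X Y)
    (hΦc : ∀ m : ℤ, ∀ x ∈ X, Φ (shiftZ A m x) = shiftZ B m (Φ x))
    {N M : ℕ}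
    (hN : ∀ x ∈ X, ∀ x' ∈ X, ∀ j : ℤ,
      (∀ k : ℤ, (k - j).natAbs ≤ N → x k = x' k) → Φ x j = Φ x' j)
    (hM : ∀ y ∈ Y, ∀ y' ∈ Y, ∀ j : ℤ,
      (∀ k : ℤ, (k - j).natAbs ≤ M → y k = y' k) → Ψ y j = Ψ y' j)
    {x : ℤ → A} (hxX : x ∈ X) {w₀ : List A} (hw₀fin : IsFinitary X w₀)
    (hw₀inf : {i : ℤ | OccursAt w₀ x i}.Infinite) :
    ∃ v : List B, IsFinitary Y v ∧ {j : ℤ | OccursAt v (Φ x) j}.Infinite := by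
  set L : ℕ := 2*N + 2*M + 1 with hLd
  set ℓ : ℕ := w₀.length + 2*L with hℓd
  set ℓv : ℕ := ℓ - 2*N with hℓvd
  set ℓg : ℕ := ℓ - 2*(N+M) with hℓgd
  obtain ⟨b, hb⟩ := pigeonhole_ext hw₀inf ℓ x L
  set I : Set ℤ := {i | i ∈ {i : ℤ | OccursAt w₀ x i} ∧ ∀ k : Fin ℓ, x (i - L + k) = b k} with hId
  set w : List A := List.ofFn b with hwd
  have hwlen : w.length = ℓ := List.length_ofFn
  have hwocc : ∀ i ∈ I, OccursAt w x (i - L) := by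
    intro i hi
    rw [hwd, occursAt_ofFn]
    intro k hk
    exact hi.2 ⟨k, hk⟩
  obtain ⟨i₁, hi₁⟩ := hb.nonempty
  -- the glue word g, finitary in X
  set g : List A := List.ofFn (fun k : Fin ℓg => x ((i₁:ℤ) - L + (N+M) + k)) with hgd
  have hglen : g.length = ℓg := List.length_ofFn
  have hgocc : OccursAt g x ((i₁:ℤ) - L + (N+M)) := by
    rw [hgd, occursAt_ofFn]; intro k hk; rfl
  have hgfin : IsFinitary X g := by
    refine ext_finitary hw₀fin hxX (d := L - (N+M)) hgocc ?_ ?_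
    · rw [show (i₁:ℤ) - L + (N+M) + ↑(L - (N+M)) = (i₁:ℤ) by push_cast; omega]
      exact hi₁.1
    · rw [hglen]; omega
  -- the target word v in Y
  set v : List B := List.ofFn (fun k : Fin ℓv => Φ x ((i₁:ℤ) - L + N + k)) with hvd
  have hvlen : v.length = ℓv := List.length_ofFn
  -- v occurs in Φ x at i - L + N for every i ∈ I
  have hvocc : ∀ i ∈ I, OccursAt v (Φ x) ((i:ℤ) - L + N) := by
    intro i hi
    rw [hvd, occursAt_ofFn]
    intro k hk
    have hsx : shiftZ A ((i:ℤ) - i₁) x ∈ X := shiftZ_mem hX _ x hxX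
    have e : Φ x ((i:ℤ) - L + N + k) = Φ (shiftZ A ((i:ℤ) - i₁) x) ((i₁:ℤ) - L + N + k) := by
      rw [hΦc _ x hxX, shiftZ_apply]
      congr 1; ring
    rw [e]
    apply hN _ hsx _ hxX
    intro k' hk'
    rw [shiftZ_apply]
    have := occursAt_agree (hwocc i hi) (hwocc i₁ hi₁) (k' + ((i:ℤ) - i₁))
      (by omega) (by rw [hwlen]; omega)
    rw [this]; congr 1; ring
  -- infinitely many occurrences
  have hocc_inf : {j : ℤ | OccursAt v (Φ x) j}.Infinite := by
    have hinj : Set.InjOn (fun i : ℤ => i - L + N) I := fun i _ j _ h => by have h' : i - (L:ℤ) + N = j - L + N := h; omega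
    refine ((hb.image hinj).mono ?_)
    rintro j ⟨i, hi, rfl⟩
    exact hvocc i hi
  refine ⟨v, ⟨⟨Φ x, hΦmaps hxX, (i₁:ℤ) - L + N, hvocc i₁ hi₁⟩, ?_⟩, hocc_inf⟩
  -- v is finitary in Y
  -- RECOVER: behind every occurrence of v in a point of Y sits the glue word g
  have recover : ∀ y ∈ Y, ∀ q : ℤ, OccursAt v y q →
      ∀ k : ℕ, k < ℓg → Ψ y (q + M + k) = x ((i₁:ℤ) - L + (N+M) + k) := by
    intro y hy q hvq k hk
    have hsx : shiftZ A ((i₁:ℤ) - L + N - q) x ∈ X := shiftZ_mem hX _ x hxX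
    have hyv' : OccursAt v (Φ (shiftZ A ((i₁:ℤ) - L + N - q) x)) q := by
      rw [hΦc _ x hxX, occursAt_shiftZ,
        show q + ((i₁:ℤ) - L + N - q) = (i₁:ℤ) - L + N by ring]
      exact hvocc i₁ hi₁
    have hmem' : Φ (shiftZ A ((i₁:ℤ) - L + N - q) x) ∈ Y := hΦmaps hsx
    have hΨeq : Ψ (Φ (shiftZ A ((i₁:ℤ) - L + N - q) x)) = shiftZ A ((i₁:ℤ) - L + N - q) x :=
      hinv.1 hsx
    have hMe := hM y hy _ hmem' (q + M + k) ?_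
    · rw [hMe, hΨeq, shiftZ_apply]
      congr 1; ring
    · intro k' hk'
      have := occursAt_agree hvq hyv' k' (by omega) (by rw [hvlen]; omega)
      rw [show k' - q + q = k' by ring] at this
      exact this
  intro u u' hu hu'
  obtain ⟨y, hy, a, hha⟩ := hu
  rw [occursAt_append] at hha
  obtain ⟨hyu, hyv⟩ := hha
  obtain ⟨z, hzY, p', hhb⟩ := hu'
  rw [occursAt_append] at hhb
  obtain ⟨hzv, hzu'⟩ := hhb
  rw [hvlen] at hzu'
  set q : ℤ := a + u.length with hqd
  have hyvq : OccursAt v y q := hyv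
  set K : ℕ := u.length + M + N + 1 with hKd
  set K' : ℕ := u'.length + N + M + 1 with hK'd
  set lpre : List A := List.ofFn (fun k : Fin K => Ψ y (q + M - K + k)) with hlpred
  set rpost : List A := List.ofFn (fun k : Fin K' => Ψ z (p' + M + ℓg + k)) with hrpostd
  have hlprelen : lpre.length = K := List.length_ofFn
  have hrpostlen : rpost.length = K' := List.length_ofFn
  -- occurrences of lpre ++ g in Ψ y and of g ++ rpost in Ψ z
  have hoccy : OccursAt (lpre ++ g) (Ψ y) (q + M - K) := by
    rw [occursAt_append]
    constructor
    · rw [hlpred, occursAt_ofFn]; intro k hk; rfl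
    · rw [hlprelen, occursAt_iff]
      intro k hk
      rw [show q + M - K + K + (k:ℤ) = q + M + k by ring]
      rw [recover y hy q hyvq k (by omega : k < ℓg)]
      exact occursAt_iff.mp hgocc k hk
  have hoccz : OccursAt (g ++ rpost) (Ψ z) (p' + M) := by
    rw [occursAt_append]
    constructor
    · rw [occursAt_iff]
      intro k hk
      rw [recover z hzY p' hzv k (by omega : k < ℓg)]
      exact occursAt_iff.mp hgocc k hk
    · rw [hglen, hrpostd, occursAt_ofFn]
      intro k hk
      rfl
  have hblkL : IsBlockOf X (lpre ++ g) := ⟨Ψ y, hΨmaps hy, _, hoccy⟩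
  have hblkR : IsBlockOf X (g ++ rpost) := ⟨Ψ z, hΨmaps hzY, _, hoccz⟩
  obtain ⟨z₃, hz₃, c, hc⟩ := hgfin.2 lpre rpost hblkL hblkR
  -- agreement of z₃ with Ψ y on the left part and Ψ z on the right part
  rw [occursAt_append, occursAt_append] at hc
  obtain ⟨⟨hcl, hcg⟩, hcr⟩ := hc
  have hocc3L : OccursAt (lpre ++ g) z₃ c := by
    rw [occursAt_append]
    exact ⟨hcl, by rw [hlprelen]; rw [hlprelen] at hcg; exact hcg⟩
  have hocc3R : OccursAt (g ++ rpost) z₃ (c + K) := by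
    rw [occursAt_append]
    constructor
    · rw [hlprelen] at hcg; exact hcg
    · rw [hglen]
      rw [List.length_append, hlprelen, hglen] at hcr
      rw [show c + (K:ℤ) + ↑ℓg = c + ↑(K + ℓg) by push_cast; ring]
      exact hcr
  have agree1 : ∀ j : ℤ, c ≤ j → j < c + K + ℓg → z₃ j = Ψ y (j - c + (q + M - K)) := by
    intro j h1 h2
    exact occursAt_agree hocc3L hoccy j h1
      (by rw [List.length_append, hlprelen, hglen]; push_cast; omega)
  have agree2 : ∀ j : ℤ, c + K ≤ j → j < c + K + ℓg + K' →
      z₃ j = Ψ z (j - (c + K) + (p' + M)) := by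
    intro j h1 h2
    exact occursAt_agree hocc3R hoccz j h1
      (by rw [List.length_append, hglen, hrpostlen]; push_cast; omega)
  -- transfer through Φ
  have hyΦ : Φ (Ψ y) = y := hinv.2 hy
  have hzΦ : Φ (Ψ z) = z := hinv.2 hzY
  have T1 : ∀ j : ℤ, c + N ≤ j → j + N < c + K + ℓg →
      Φ z₃ j = y (j + (q + M - K - c)) := by
    intro j h1 h2
    have hsy : shiftZ A (q + M - K - c) (Ψ y) ∈ X := shiftZ_mem hX _ _ (hΨmaps hy)
    have e2 : Φ (shiftZ A (q + M - K - c) (Ψ y)) = shiftZ B (q + M - K - c) y := by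
      rw [hΦc _ _ (hΨmaps hy), hyΦ]
    have := hN z₃ hz₃ _ hsy j ?_
    · rw [this, e2, shiftZ_apply]
    · intro k' hk'
      rw [shiftZ_apply]
      rw [agree1 k' (by omega) (by omega)]
      congr 1; ring
  have T2 : ∀ j : ℤ, c + K + N ≤ j → j + N < c + K + ℓg + K' →
      Φ z₃ j = z (j + (p' + M - (c + K))) := by
    intro j h1 h2
    have hsz : shiftZ A (p' + M - (c + K)) (Ψ z) ∈ X := shiftZ_mem hX _ _ (hΨmaps hzY)
    have e2 : Φ (shiftZ A (p' + M - (c + K)) (Ψ z)) = shiftZ B (p' + M - (c + K)) z := by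
      rw [hΦc _ _ (hΨmaps hzY), hzΦ]
    have := hN z₃ hz₃ _ hsz j ?_
    · rw [this, e2, shiftZ_apply]
    · intro k' hk'
      rw [shiftZ_apply]
      rw [agree2 k' (by omega) (by omega)]
      congr 1; ring
  -- length facts for omega
  have hℓg2 : ℓg = w₀.length + 2*N + 2*M + 2 := by omega
  have hℓv2 : ℓv = w₀.length + 2*N + 4*M + 2 := by omega
  -- assemble the occurrence of u ++ v ++ u' in Φ z₃
  refine ⟨Φ z₃, hΦmaps hz₃, c + K - M - u.length, ?_⟩
  rw [occursAt_append, occursAt_append]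
  refine ⟨⟨?_, ?_⟩, ?_⟩
  · -- u
    rw [occursAt_iff]
    intro k hk
    rw [T1 (c + K - M - u.length + k) (by omega) (by omega)]
    have := occursAt_iff.mp hyu k hk
    rw [show c + (K:ℤ) - M - u.length + k + (q + M - K - c) = a + k by omega]
    exact this
  · -- v
    rw [occursAt_iff]
    intro k hk
    rw [hvlen] at hk
    rcases lt_or_ge (k + M + N) ℓv with hcase | hcase
    · rw [T1 (c + K - M - u.length + u.length + k) (by omega) (by omega)]
      have := occursAt_iff.mp hyvq k (by rw [hvlen]; omega)
      rw [show c + (K:ℤ) - M - u.length + u.length + k + (q + M - K - c) = q + k by omega]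
      exact this
    · rw [T2 (c + K - M - u.length + u.length + k) (by omega) (by omega)]
      have := occursAt_iff.mp hzv k (by rw [hvlen]; omega)
      rw [show c + (K:ℤ) - M - u.length + u.length + k + (p' + M - (c + K)) = p' + k by omega]
      exact this
  · -- u'
    rw [List.length_append, hvlen, occursAt_iff]
    intro k hk
    rw [show c + (K:ℤ) - M - u.length + ↑(u.length + ℓv) + (k:ℤ) =
      c + (K:ℤ) - M + ℓv + k by push_cast; ring]
    rw [T2 (c + K - M + ℓv + k) (by omega) (by omega)]
    have := occursAt_iff.mp hzu' k hk
    rw [show c + (K:ℤ) - M + ℓv + k + (p' + M - (c + K)) = p' + ℓv + k by omega]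
    exact this
end Transfer

section Main
variable {A : Type*} [Fintype A] [TopologicalSpace A] [DiscreteTopology A]
variable {B : Type*} [Fintype B] [TopologicalSpace B] [DiscreteTopology B]

lemma main_incl {X : Set (ℤ → A)} (hX : IsShiftSpace X) {Y : Set (ℤ → B)} (hY : IsShiftSpace Y)
    {φ : (ℤ → A) → ℤ → A} (hφmaps : MapsTo φ X X)
    {ψ : (ℤ → B) → ℤ → B}
    {Φ : (ℤ → A) → ℤ → B} {Ψ : (ℤ → B) → ℤ → A}
    (hΦmaps : MapsTo Φ X Y) (hΦcont : ContinuousOn Φ X)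
    (hΨmaps : MapsTo Ψ Y X) (hΨcont : ContinuousOn Ψ Y)
    (hinv : InvOn Ψ Φ X Y)
    (hshift : ∀ x ∈ X, Φ (shiftMap A x) = shiftMap B (Φ x))
    (hΨshift : ∀ y ∈ Y, Ψ (shiftMap B y) = shiftMap A (Ψ y))
    (hflip : ∀ x ∈ X, Φ (φ x) = ψ (Φ x)) :
    ∀ x ∈ flipAsym X φ, Φ x ∈ flipAsym Y ψ := by
  obtain ⟨N, hN⟩ := exists_radius hX Φ hΦcont hshift
  obtain ⟨M, hM⟩ := exists_radius hY Ψ hΨcont hΨshift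
  have hΦc := commute_shiftZ hX Φ hshift
  intro x hx
  obtain ⟨hxX, ⟨w₀, hw₀fin, hw₀inf⟩, hne, hfin⟩ := hx
  have hφx : φ x ∈ X := hφmaps hxX
  refine ⟨hΦmaps hxX, ?_, ?_, ?_⟩
  · exact finitary_transfer hX hΦmaps hΨmaps hinv hΦc hN hM hxX hw₀fin hw₀inf
  · -- difference set nonempty
    rw [Set.nonempty_iff_ne_empty]
    intro hemp
    have heq : ψ (Φ x) = Φ x := by
      funext i
      by_contra hne2
      exact absurd (hemp ▸ hne2 : i ∈ (∅ : Set ℤ)) (Set.notMem_empty i)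
    have h1 : Φ (φ x) = Φ x := by rw [hflip x hxX, heq]
    have h2 : φ x = x := by
      have e1 := hinv.1 hφx
      have e2 := hinv.1 hxX
      rw [← e1, h1, e2]
    obtain ⟨i, hi⟩ := hne
    exact hi (by rw [h2])
  · -- difference set finite
    have key : {i | ψ (Φ x) i ≠ Φ x i} ⊆ ⋃ s ∈ {i | φ x i ≠ x i}, Set.Icc (s - N) (s + N) := by
      intro j hj
      by_contra hjn
      apply hj
      show ψ (Φ x) j = Φ x j
      rw [← hflip x hxX]
      apply hN (φ x) hφx x hxX j
      intro k hk
      by_contra hne2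
      exact hjn (Set.mem_biUnion (hne2 : k ∈ {i | φ x i ≠ x i}) (by simp; omega))
    exact (Set.Finite.biUnion hfin (fun s _ => Set.finite_Icc _ _)).subset key
end Main

/-- If `Φ` is a conjugacy from the shift-flip system `(X, σ_X, φ)` to `(Y, σ_Y, ψ)`,
then `Φ(A(φ)) = A(ψ)`. -/
theorem conjugacy_image_flipAsym
    {A B : Type*} [Fintype A] [TopologicalSpace A] [DiscreteTopology A]
    [Fintype B] [TopologicalSpace B] [DiscreteTopology B]
    (X : Set (ℤ → A)) (hX : IsShiftSpace X) (Y : Set (ℤ → B)) (hY : IsShiftSpace Y)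
    (φ : (ℤ → A) → ℤ → A) (hφ : IsFlip X φ)
    (ψ : (ℤ → B) → ℤ → B) (hψ : IsFlip Y ψ)
    (Φ : (ℤ → A) → ℤ → B) (Ψ : (ℤ → B) → ℤ → A)
    (hΦmaps : Set.MapsTo Φ X Y) (hΦcont : ContinuousOn Φ X)
    (hΨmaps : Set.MapsTo Ψ Y X) (hΨcont : ContinuousOn Ψ Y)
    (hinv : Set.InvOn Ψ Φ X Y)
    (hshift : ∀ x ∈ X, Φ (shiftMap A x) = shiftMap B (Φ x))
    (hflip : ∀ x ∈ X, Φ (φ x) = ψ (Φ x)) :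
    Φ '' flipAsym X φ = flipAsym Y ψ := by
  have hΨshift : ∀ y ∈ Y, Ψ (shiftMap B y) = shiftMap A (Ψ y) := by
    intro y hy
    have hx : Ψ y ∈ X := hΨmaps hy
    have h1 : Φ (Ψ y) = y := hinv.2 hy
    have h2 : Φ (shiftMap A (Ψ y)) = shiftMap B y := by rw [hshift _ hx, h1]
    have h3 : shiftMap A (Ψ y) ∈ X := shiftZ_mem hX 1 _ hx
    calc Ψ (shiftMap B y) = Ψ (Φ (shiftMap A (Ψ y))) := by rw [h2]
      _ = shiftMap A (Ψ y) := hinv.1 h3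
  have hΨflip : ∀ y ∈ Y, Ψ (ψ y) = φ (Ψ y) := by
    intro y hy
    have hx : Ψ y ∈ X := hΨmaps hy
    have h1 : Φ (Ψ y) = y := hinv.2 hy
    have h2 : Φ (φ (Ψ y)) = ψ y := by rw [hflip _ hx, h1]
    have h3 : φ (Ψ y) ∈ X := hφ.1 hx
    calc Ψ (ψ y) = Ψ (Φ (φ (Ψ y))) := by rw [h2]
      _ = φ (Ψ y) := hinv.1 h3
  apply Set.Subset.antisymm
  · rintro _ ⟨x, hx, rfl⟩
    exact main_incl hX hY hφ.1 hΦmaps hΦcont hΨmaps hΨcont hinv hshift hΨshift hflip x hx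
  · intro y hy
    have hyY : y ∈ Y := hy.1
    have hmem := main_incl hY hX hψ.1 hΨmaps hΨcont hΦmaps hΦcont hinv.symm
      hΨshift hshift hΨflip y hy
    exact ⟨Ψ y, hmem, hinv.2 hyY⟩
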